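/- Let p be a prime, l ≥ 1, and n = q·p^k with gcd(q, p) = 1 and k ≥ 0. Set α = 1 + k + [p = 2 and k > 0] (i.e., α = 1 + k, plus an extra 1 exactly when p = 2 and k ≥ 1). Then for each residue r with 0 < r < p, the map C_r : {0, ..., p^l − 1} → {0, ..., p^l − 1} defined by C_r(x') = ⌊(p·x' + r)^n / p^α⌋ mod p^l is a bijection. -/

import Mathlib

private lemma pct_emult_n (p : ℕ) (hp : p.Prime) (n q k : ℕ) (hnqk : n = q * p ^ k)
    (hq : ¬ p ∣ q) : emultiplicity p n = k := by
  rw [hnqk, emultiplicity_mul hp.prime,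
    emultiplicity_eq_zero.2 hq, emultiplicity_pow_self_of_prime hp.prime, zero_add]

private lemma pct_fwd (p : ℕ) (hp : p.Prime) (n q k : ℕ) (hn : 0 < n)
    (hnqk : n = q * p ^ k) (hq : ¬ p ∣ q) (x y : ℤ)
    (hx : ¬ (p : ℤ) ∣ x) (hy : ¬ (p : ℤ) ∣ y) (hxy : (p : ℤ) ∣ x - y) :
    (p : ℤ) ^ (1 + k + if p = 2 ∧ 0 < k then 1 else 0) ∣ x ^ n - y ^ n := by
  have hvn := pct_emult_n p hp n q k hnqk hq
  apply pow_dvd_of_le_emultiplicity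
  have hA1 : ((1 : ℕ) : ℕ∞) ≤ emultiplicity (p : ℤ) (x - y) :=
    le_emultiplicity_of_pow_dvd (by simpa using hxy)
  by_cases hp2 : p = 2
  · subst hp2
    by_cases hk : 0 < k
    · rw [if_pos ⟨rfl, hk⟩]
      have hneven : Even n := by
        refine even_iff_two_dvd.2 ?_
        rw [hnqk]
        exact Dvd.dvd.mul_left (dvd_pow_self 2 hk.ne') q
      have hxy2 : (2 : ℤ) ∣ x - y := by exact_mod_cast hxy
      have hx2 : ¬ (2 : ℤ) ∣ x := by exact_mod_cast hx
      have hy2 : ¬ (2 : ℤ) ∣ y := by exact_mod_cast hy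
      have lte := Int.two_pow_sub_pow hxy2 hx2 hneven
      have hvn' : emultiplicity (2 : ℤ) ((n : ℕ) : ℤ) = k := by
        rw [show (2:ℤ) = ((2:ℕ):ℤ) by norm_num, Int.natCast_emultiplicity]; exact hvn
      rw [hvn'] at lte
      have h4 : (4 : ℤ) ∣ x - y ∨ (4 : ℤ) ∣ x + y := by omega
      have hsum1 : ((1:ℕ) : ℕ∞) ≤ emultiplicity (2:ℤ) (x + y) :=
        le_emultiplicity_of_pow_dvd (by rw [pow_one]; omega)
      have hdiff1 : ((1:ℕ) : ℕ∞) ≤ emultiplicity (2:ℤ) (x - y) :=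
        le_emultiplicity_of_pow_dvd (by rw [pow_one]; exact hxy2)
      have h3 : ((3:ℕ) : ℕ∞) ≤ emultiplicity (2:ℤ) (x + y) + emultiplicity (2:ℤ) (x - y) := by
        rcases h4 with h4 | h4
        · have h2' : ((2:ℕ) : ℕ∞) ≤ emultiplicity (2:ℤ) (x - y) :=
            le_emultiplicity_of_pow_dvd (by norm_num; exact h4)
          calc ((3:ℕ) : ℕ∞) = ((1:ℕ):ℕ∞) + ((2:ℕ):ℕ∞) := by norm_num
            _ ≤ _ := add_le_add hsum1 h2'
        · have h2' : ((2:ℕ) : ℕ∞) ≤ emultiplicity (2:ℤ) (x + y) :=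
            le_emultiplicity_of_pow_dvd (by norm_num; exact h4)
          calc ((3:ℕ) : ℕ∞) = ((2:ℕ):ℕ∞) + ((1:ℕ):ℕ∞) := by norm_num
            _ ≤ _ := add_le_add h2' hdiff1
      have key : ((1 + k + 1 : ℕ) : ℕ∞) + 1 ≤ emultiplicity ((2:ℕ):ℤ) (x ^ n - y ^ n) + 1 := by
        rw [show ((2:ℕ):ℤ) = (2:ℤ) by norm_num, lte]
        calc ((1 + k + 1 : ℕ) : ℕ∞) + 1 = ((3:ℕ) : ℕ∞) + (k : ℕ∞) := by
              push_cast; ring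
          _ ≤ (emultiplicity (2:ℤ) (x + y) + emultiplicity (2:ℤ) (x - y)) + (k : ℕ∞) :=
              add_le_add h3 le_rfl
      exact (WithTop.add_le_add_iff_right (by simp : (1 : ℕ∞) ≠ ⊤)).1 key
    · have hk0 : k = 0 := by omega
      subst hk0
      rw [if_neg (by tauto)]
      have hnd : ¬ ((2:ℕ) : ℤ) ∣ ((n : ℕ) : ℤ) := by
        rw [Int.natCast_dvd_natCast]
        simpa [hnqk] using hq
      have lte := emultiplicity_pow_sub_pow_of_prime
        (by exact_mod_cast Int.prime_two : Prime ((2:ℕ) : ℤ)) hxy hx hnd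
      rw [lte]
      exact le_trans (by norm_num) hA1
  · have hodd : Odd p := hp.odd_of_ne_two hp2
    rw [if_neg (by tauto)]
    have lte := Int.emultiplicity_pow_sub_pow hp hodd hxy hx n
    rw [lte, hvn]
    calc ((1 + k + 0 : ℕ) : ℕ∞) = ((1:ℕ) : ℕ∞) + (k : ℕ∞) := by push_cast; ring
      _ ≤ _ := add_le_add hA1 le_rfl

private lemma pct_bwd (p : ℕ) (hp : p.Prime) (l : ℕ) (n q k : ℕ) (hn : 0 < n)
    (hnqk : n = q * p ^ k) (hq : ¬ p ∣ q) (x y : ℤ)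
    (hx : ¬ (p : ℤ) ∣ x) (hy : ¬ (p : ℤ) ∣ y) (hxy : (p : ℤ) ∣ x - y)
    (hsum : ¬ (p : ℤ) ^ (l + 2) ∣ x + y)
    (h : (p : ℤ) ^ (1 + k + (if p = 2 ∧ 0 < k then 1 else 0) + l) ∣ x ^ n - y ^ n) :
    (p : ℤ) ^ (l + 1) ∣ x - y := by
  have hvn := pct_emult_n p hp n q k hnqk hq
  by_cases hz : x = y
  · rw [hz, sub_self]; exact dvd_zero _
  have hfinA : FiniteMultiplicity (p : ℤ) (x - y) :=
    Int.finiteMultiplicity_iff.2 ⟨by simpa using hp.ne_one, sub_ne_zero.2 hz⟩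
  apply pow_dvd_of_le_emultiplicity
  have hv := le_emultiplicity_of_pow_dvd h
  lift emultiplicity ((p : ℤ)) (x - y) to ℕ using finiteMultiplicity_iff_emultiplicity_ne_top.1 hfinA with a ha
  by_cases hp2 : p = 2
  · subst hp2
    by_cases hk : 0 < k
    · rw [if_pos ⟨rfl, hk⟩] at hv
      have hneven : Even n := by
        refine even_iff_two_dvd.2 ?_
        rw [hnqk]
        exact Dvd.dvd.mul_left (dvd_pow_self 2 hk.ne') q
      have hxy2 : (2 : ℤ) ∣ x - y := by exact_mod_cast hxy
      have hx2 : ¬ (2 : ℤ) ∣ x := by exact_mod_cast hx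
      have hy2 : ¬ (2 : ℤ) ∣ y := by exact_mod_cast hy
      have lte := Int.two_pow_sub_pow hxy2 hx2 hneven
      have hvn' : emultiplicity (2 : ℤ) ((n : ℕ) : ℤ) = k := by
        rw [show (2:ℤ) = ((2:ℕ):ℤ) by norm_num, Int.natCast_emultiplicity]; exact hvn
      rw [hvn'] at lte
      rw [show ((2:ℕ):ℤ) = (2:ℤ) by norm_num] at hv ha
      rw [← ha] at lte
      have hBlt : emultiplicity (2:ℤ) (x + y) < ((l + 2 : ℕ) : ℕ∞) := by
        refine emultiplicity_lt_iff_not_dvd.2 ?_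
        intro hdvd; exact hsum (by exact_mod_cast hdvd)
      lift emultiplicity ((2:ℤ)) (x + y) to ℕ using hBlt.ne_top with b hb
      have hvne : emultiplicity (2:ℤ) (x ^ n - y ^ n) ≠ ⊤ := by
        intro ht
        rw [ht, top_add] at lte
        push_cast at lte
        exact (WithTop.top_ne_coe (a := b + a + k)) (by exact_mod_cast lte)
      lift emultiplicity ((2:ℤ)) (x ^ n - y ^ n) to ℕ using hvne with v hveq
      have hlte' : v + 1 = b + a + k := by exact_mod_cast lte
      have hv' : 1 + k + 1 + l ≤ v := by exact_mod_cast hv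
      have hblt' : b < l + 2 := by exact_mod_cast hBlt
      have ha2 : 2 ≤ a := by omega
      have h4 : (2:ℤ) ^ 2 ∣ x - y :=
        pow_dvd_of_le_emultiplicity (by rw [← ha]; exact_mod_cast ha2)
      have h2self : emultiplicity (2:ℤ) 2 = 1 := by
        simpa using emultiplicity_pow_self_of_prime Int.prime_two 1
      have h2y : emultiplicity (2:ℤ) (2 * y) = ((1:ℕ) : ℕ∞) := by
        rw [emultiplicity_mul Int.prime_two, emultiplicity_eq_zero.2 hy2, add_zero, h2self]
        norm_num
      have hgt : emultiplicity (2:ℤ) (2 * y) < emultiplicity (2:ℤ) (x - y) := by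
        rw [h2y, ← ha]
        exact_mod_cast (by omega : 1 < a)
      have hB1 : emultiplicity (2:ℤ) (x + y) = ((1:ℕ) : ℕ∞) := by
        rw [show x + y = (x - y) + 2 * y by ring, emultiplicity_add_of_gt hgt, h2y]
      have hb1 : b = 1 := by
        have hbb : ((b:ℕ) : ℕ∞) = ((1:ℕ) : ℕ∞) := by rw [hb, hB1]
        exact_mod_cast hbb
      exact_mod_cast (by omega : l + 1 ≤ a)
    · have hk0 : k = 0 := by omega
      subst hk0
      rw [if_neg (by simp)] at hv
      have hnd : ¬ ((2:ℕ) : ℤ) ∣ ((n : ℕ) : ℤ) := by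
        rw [Int.natCast_dvd_natCast]
        simpa [hnqk] using hq
      have lte := emultiplicity_pow_sub_pow_of_prime
        (by exact_mod_cast Int.prime_two : Prime ((2:ℕ) : ℤ)) hxy hx hnd
      rw [lte, ← ha] at hv
      have hv' : 1 + 0 + 0 + l ≤ a := by exact_mod_cast hv
      exact_mod_cast (by omega : l + 1 ≤ a)
  · have hodd : Odd p := hp.odd_of_ne_two hp2
    rw [if_neg (by tauto)] at hv
    have lte := Int.emultiplicity_pow_sub_pow hp hodd hxy hx n
    rw [lte, hvn, ← ha] at hv
    have hv' : 1 + k + 0 + l ≤ a + k := by exact_mod_cast hv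
    exact_mod_cast (by omega : l + 1 ≤ a)

theorem power_coding_theorem (p : ℕ) (hp : p.Prime) (l : ℕ) (hl : 1 ≤ l)
    (n q k : ℕ) (hn : 0 < n) (hnqk : n = q * p ^ k) (hq : ¬ p ∣ q)
    (r : ℕ) (hr0 : 0 < r) (hrp : r < p) :
    Set.BijOn
      (fun x' : ℕ =>
        ((p * x' + r) ^ n / p ^ (1 + k + if p = 2 ∧ 0 < k then 1 else 0)) % p ^ l)
      (Set.Iio (p ^ l)) (Set.Iio (p ^ l)) := by
  have hplpos : 0 < p ^ l := pow_pos hp.pos l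
  have hmaps : Set.MapsTo
      (fun x' : ℕ =>
        ((p * x' + r) ^ n / p ^ (1 + k + if p = 2 ∧ 0 < k then 1 else 0)) % p ^ l)
      (Set.Iio (p ^ l)) (Set.Iio (p ^ l)) :=
    fun x _ => Set.mem_Iio.2 (Nat.mod_lt _ hplpos)
  refine ((Set.finite_Iio _).injOn_iff_bijOn_of_mapsTo hmaps).1 ?_
  intro x' hx' y' hy' heq
  simp only [Set.mem_Iio] at hx' hy'
  dsimp only at heq
  set α : ℕ := 1 + k + if p = 2 ∧ 0 < k then 1 else 0 with hα
  set X : ℕ := p * x' + r with hX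
  set Y : ℕ := p * y' + r with hY
  have hnd : ∀ z' : ℕ, ¬ (p : ℤ) ∣ ((p * z' + r : ℕ) : ℤ) := by
    intro z' hd
    rw [Int.natCast_dvd_natCast] at hd
    have : p ∣ r := (Nat.dvd_add_right (dvd_mul_right p z')).1 hd
    exact absurd (Nat.le_of_dvd hr0 this) (by omega)
  have hXYd : (p : ℤ) ∣ (X : ℤ) - (Y : ℤ) := ⟨(x' : ℤ) - y', by rw [hX, hY]; push_cast; ring⟩
  -- forward: low digits agree
  have hfwd := pct_fwd p hp n q k hn hnqk hq X Y (hnd x') (hnd y') hXYd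
  have hlow : X ^ n ≡ Y ^ n [MOD p ^ α] := by
    rw [Nat.modEq_iff_dvd]
    push_cast
    rw [hα]
    simpa [neg_sub] using dvd_neg.2 hfwd
  -- combine with heq to get congruence mod p^(α+l)
  have hmod : X ^ n % (p ^ α * p ^ l) = Y ^ n % (p ^ α * p ^ l) := by
    have e1 : X ^ n % (p ^ α * p ^ l) / p ^ α = Y ^ n % (p ^ α * p ^ l) / p ^ α := by
      rw [Nat.mod_mul_right_div_self, Nat.mod_mul_right_div_self]
      exact heq
    have e2 : X ^ n % (p ^ α * p ^ l) % p ^ α = Y ^ n % (p ^ α * p ^ l) % p ^ α := by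
      rw [Nat.mod_mod_of_dvd _ (dvd_mul_right _ _), Nat.mod_mod_of_dvd _ (dvd_mul_right _ _)]
      exact hlow
    have d1 := Nat.div_add_mod (X ^ n % (p ^ α * p ^ l)) (p ^ α)
    have d2 := Nat.div_add_mod (Y ^ n % (p ^ α * p ^ l)) (p ^ α)
    rw [← d1, ← d2, e1, e2]
  have hdvd2 : (p : ℤ) ^ (α + l) ∣ (X : ℤ) ^ n - (Y : ℤ) ^ n := by
    have := (Nat.modEq_iff_dvd.1 (hmod : X ^ n ≡ Y ^ n [MOD p ^ α * p ^ l]))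
    push_cast at this
    rw [← pow_add] at this
    simpa [neg_sub] using dvd_neg.2 this
  -- bound on X + Y
  have hXlt : X < p ^ (l + 1) := by
    have h1 : p * x' + r < p * (x' + 1) := by
      have := hp.two_le; nlinarith
    have h2 : p * (x' + 1) ≤ p * p ^ l := Nat.mul_le_mul_left p (by omega)
    calc X < p * (x' + 1) := h1
      _ ≤ p * p ^ l := h2
      _ = p ^ (l + 1) := (pow_succ' p l).symm
  have hYlt : Y < p ^ (l + 1) := by
    have h1 : p * y' + r < p * (y' + 1) := by
      have := hp.two_le; nlinarith
    have h2 : p * (y' + 1) ≤ p * p ^ l := Nat.mul_le_mul_left p (by omega)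
    calc Y < p * (y' + 1) := h1
      _ ≤ p * p ^ l := h2
      _ = p ^ (l + 1) := (pow_succ' p l).symm
  have hsum : ¬ (p : ℤ) ^ (l + 2) ∣ (X : ℤ) + (Y : ℤ) := by
    intro hd
    have hpos : (0 : ℤ) < (X : ℤ) + (Y : ℤ) := by
      have : 0 < X := by omega
      have : 0 < Y := by omega
      push_cast
      omega
    have hle := Int.le_of_dvd hpos hd
    have hlt : X + Y < p ^ (l + 2) := by
      have h2p : 2 ≤ p := hp.two_le
      have : p ^ (l + 2) = p * p ^ (l + 1) := pow_succ' p (l + 1)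
      nlinarith
    have : ((X + Y : ℕ) : ℤ) < ((p ^ (l + 2) : ℕ) : ℤ) := by exact_mod_cast hlt
    push_cast at this
    omega
  have hbwd := pct_bwd p hp l n q k hn hnqk hq X Y (hnd x') (hnd y') hXYd hsum
    (by rw [← hα]; exact hdvd2)
  -- conclude x' = y'
  have hdiff : (p : ℤ) ^ l ∣ (x' : ℤ) - (y' : ℤ) := by
    have hXY : (X : ℤ) - (Y : ℤ) = (p : ℤ) * ((x' : ℤ) - y') := by
      rw [hX, hY]; push_cast; ring
    rw [hXY, pow_succ'] at hbwd
    exact (mul_dvd_mul_iff_left (by exact_mod_cast hp.pos.ne' : (p : ℤ) ≠ 0)).1 hbwd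
  have habs : |(x' : ℤ) - (y' : ℤ)| < (p : ℤ) ^ l := by
    have h1 : (x' : ℤ) < (p : ℤ) ^ l := by exact_mod_cast hx'
    have h2 : (y' : ℤ) < (p : ℤ) ^ l := by exact_mod_cast hy'
    have h3 : (0 : ℤ) ≤ (x' : ℤ) := Int.natCast_nonneg x'
    have h4 : (0 : ℤ) ≤ (y' : ℤ) := Int.natCast_nonneg y'
    rw [abs_lt]
    omega
  have := Int.eq_zero_of_abs_lt_dvd hdiff habs
  have : (x' : ℤ) = y' := by omega
  exact_mod_cast this
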